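/- Uniqueness of the canonical decomposition: let K be a field and A a deformation ring over K with maximal ideal m. Suppose a vector (a₁, …, a_k) ∈ mᵏ admits two decompositions (a₁,…,a_k) = b₁V₁ + b₁b₂V₂ + ⋯ + b₁⋯b_hV_h = c₁W₁ + c₁c₂W₂ + ⋯ + c₁⋯c_sW_s, where b₁,…,b_h and c₁,…,c_s are nonzero elements of m, the vectors V₁,…,V_h ∈ Kᵏ are linearly independent over K, and the vectors W₁,…,W_s ∈ Kᵏ are linearly independent over K (each V_i, W_j viewed in Aᵏ via K → A componentwise). Then h = s, and the two decompositions generate the same flag: for every i ∈ {1,…,h}, the K-linear span of {V₁,…,V_i} equals the K-linear span of {W₁,…,W_i}. -/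

import Mathlib

open IsLocalRing Finset

namespace CanonDecomp

variable {K A : Type} [Field K] [CommRing A] [IsDomain A] [ValuationRing A] [Algebra K A]

lemma exists_min_dvd {ι : Type} (e : ι → A) (S : Finset ι) (hS : S.Nonempty) :
    ∃ j ∈ S, ∀ l ∈ S, e j ∣ e l := by
  classical
  induction S using Finset.cons_induction with
  | empty => exact absurd hS (by simp)
  | cons a S ha ih =>
    rcases S.eq_empty_or_nonempty with rfl | hS'
    · exact ⟨a, by simp, by simp⟩
    · obtain ⟨j, hj, hall⟩ := ih hS'
      rcases ValuationRing.dvd_total (e j) (e a) with hd | hd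
      · refine ⟨j, by simp [hj], fun l hl => ?_⟩
        rcases Finset.mem_cons.1 hl with rfl | hl
        · exact hd
        · exact hall l hl
      · refine ⟨a, by simp, fun l hl => ?_⟩
        rcases Finset.mem_cons.1 hl with rfl | hl
        · exact dvd_rfl
        · exact hd.trans (hall l hl)

variable (hres : Function.Bijective ((residue A).comp (algebraMap K A)))

noncomputable def res : A →+* K :=
  ((RingEquiv.ofBijective ((residue A).comp (algebraMap K A)) hres).symm : _ →+* K).comp
    (residue A)

lemma res_algebraMap (x : K) : res hres (algebraMap K A x) = x := by
  show (RingEquiv.ofBijective ((residue A).comp (algebraMap K A)) hres).symm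
      (residue A (algebraMap K A x)) = x
  exact (RingEquiv.ofBijective ((residue A).comp (algebraMap K A)) hres).symm_apply_apply x

lemma res_eq_zero {x : A} (hx : x ∈ maximalIdeal A) : res hres x = 0 := by
  have : residue A x = 0 := (residue_eq_zero_iff x).2 hx
  simp [res, this]

variable {k : ℕ}

/-- coordinatewise embedding of `Kᵏ` into `Aᵏ`. -/
def emb (v : Fin k → K) : Fin k → A := fun j => algebraMap K A (v j)

include hres in
/-- Key divisibility lemma: if `∑ eₗ Vₗ = d·z` with the `Vₗ` linearly independent over `K`,
then `d` divides every `eₗ`. -/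
lemma dvd_of_rel {n : ℕ} {V : Fin n → Fin k → K} (hV : LinearIndependent K V)
    (e : Fin n → A) (d : A) (z : Fin k → A)
    (hrel : ∀ j, ∑ l, e l * algebraMap K A (V l j) = d * z j) :
    ∀ l, d ∣ e l := by
  by_cases he : ∀ l, e l = 0
  · intro l; rw [he l]; exact dvd_zero d
  push_neg at he
  obtain ⟨l₀, hl₀⟩ := he
  obtain ⟨j₀, -, hj₀⟩ := exists_min_dvd e Finset.univ ⟨l₀, Finset.mem_univ _⟩
  have hj₀' : ∀ l, e j₀ ∣ e l := fun l => hj₀ l (Finset.mem_univ l)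
  have hej₀ : e j₀ ≠ 0 := by
    intro h
    exact hl₀ (zero_dvd_iff.1 (h ▸ hj₀' l₀))
  rcases ValuationRing.dvd_total d (e j₀) with hd | hd
  · exact fun l => hd.trans (hj₀' l)
  obtain ⟨t, ht⟩ := hd
  by_cases htu : IsUnit t
  · intro l
    refine (Dvd.intro ↑htu.unit⁻¹ ?_).trans (hj₀' l)
    rw [ht]
    rw [mul_assoc]
    simp
  · exfalso
    have htm : t ∈ maximalIdeal A := htu
    choose f hf using hj₀'
    have hcan : ∀ j, ∑ l, f l * algebraMap K A (V l j) = t * z j := by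
      intro j
      apply mul_left_cancel₀ hej₀
      rw [Finset.mul_sum]
      calc ∑ l, e j₀ * (f l * algebraMap K A (V l j))
          = ∑ l, e l * algebraMap K A (V l j) := by
            refine Finset.sum_congr rfl fun l _ => ?_
            rw [← mul_assoc, ← hf l]
        _ = d * z j := hrel j
        _ = e j₀ * (t * z j) := by rw [ht, mul_assoc]
    have hres0 : ∀ j, ∑ l, res hres (f l) * V l j = 0 := by
      intro j
      have := congrArg (res hres) (hcan j)
      rw [map_sum, map_mul, res_eq_zero hres htm, zero_mul] at this
      simpa [res_algebraMap hres] using this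
    have hg : ∀ l, res hres (f l) = 0 := by
      refine Fintype.linearIndependent_iff.1 hV (fun l => res hres (f l)) ?_
      funext j
      simpa [Finset.sum_apply] using hres0 j
    have hfj₀ : f j₀ = 1 := by
      apply mul_left_cancel₀ hej₀
      rw [← hf j₀, mul_one]
    have := hg j₀
    rw [hfj₀, map_one] at this
    exact one_ne_zero this


/-- the coefficient `b₁⋯bᵢ`. -/
def pp {h : ℕ} (b : Fin h → A) (i : Fin h) : A := ∏ l ∈ Iic i, b l

variable {h : ℕ} {b : Fin h → A}

lemma pp_mem (hb : ∀ i, b i ∈ maximalIdeal A ∧ b i ≠ 0) (i : Fin h) :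
    pp b i ∈ maximalIdeal A := by
  rw [pp, ← Finset.mul_prod_erase (Iic i) b (mem_Iic.2 le_rfl)]
  exact Ideal.mul_mem_right _ _ (hb i).1

lemma pp_ne_zero (hb : ∀ i, b i ∈ maximalIdeal A ∧ b i ≠ 0) (i : Fin h) :
    pp b i ≠ 0 :=
  Finset.prod_ne_zero_iff.2 fun l _ => (hb l).2

lemma pp_factor (hb : ∀ i, b i ∈ maximalIdeal A ∧ b i ≠ 0) {l l' : Fin h} (hll : l < l') :
    ∃ q ∈ maximalIdeal A, pp b l' = pp b l * q := by
  refine ⟨∏ m ∈ Ioc l l', b m, ?_, ?_⟩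
  · rw [← Finset.mul_prod_erase (Ioc l l') b (mem_Ioc.2 ⟨hll, le_rfl⟩)]
    exact Ideal.mul_mem_right _ _ (hb l').1
  · rw [pp, pp, ← Finset.prod_union (by
      rw [Finset.disjoint_left]
      intro x hx hx'
      simp only [mem_Iic, mem_Ioc] at hx hx'
      exact absurd (lt_of_le_of_lt hx hx'.1) (lt_irrefl x))]
    congr 1
    ext x
    simp only [Finset.mem_union, mem_Iic, mem_Ioc, Fin.le_def, Fin.lt_def]
    omega

/-- The set of reductions of approximate quotients of `a` relative to the subspace `U`. -/
def stepSet (a : Fin k → A) (U : Submodule K (Fin k → K)) : Set (Fin k → K) :=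
  { w | ∃ d : A, ∃ x y t : Fin k → A, d ≠ 0 ∧
      x ∈ Submodule.span A (emb (K := K) (A := A) '' (U : Set (Fin k → K))) ∧
      (∀ j, t j ∈ maximalIdeal A) ∧
      (∀ j, a j = x j + d * y j + d * t j) ∧
      w = fun j => res hres (y j) }

/-- The canonical flag attached to a vector `a ∈ Aᵏ`. -/
noncomputable def flag (a : Fin k → A) : ℕ → Submodule K (Fin k → K)
  | 0 => ⊥
  | i+1 => Submodule.span K (stepSet hres a (flag a i))

include hres in
lemma key (V : Fin h → Fin k → K)
    (hb : ∀ i, b i ∈ maximalIdeal A ∧ b i ≠ 0) (hV : LinearIndependent K V)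
    (a : Fin k → A) (ha : ∀ j, a j = ∑ i, pp b i * algebraMap K A (V i j))
    (i : ℕ) (hi : i ≤ h) :
    Submodule.span K (stepSet hres a (Submodule.span K (V '' {l | l.1 < i}))) =
    Submodule.span K (V '' {l | l.1 < min (i+1) h}) := by
  classical
  apply le_antisymm
  · -- every generator of the step is in the span of `V₁,…,V_{min(i+1,h)}`
    rw [Submodule.span_le]
    rintro w ⟨d, x, y, t, hd, hx, htm, heqn, rfl⟩
    set g : Fin h → (Fin k → A) := fun l => if l.1 < i then emb (K := K) (A := A) (V l) else 0
      with hg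
    have hx' : x ∈ Submodule.span A (Set.range g) := by
      refine Submodule.span_le.2 ?_ hx
      rintro _ ⟨u, hu, rfl⟩
      refine Submodule.span_induction
        (p := fun u _ => emb (K := K) (A := A) u ∈ Submodule.span A (Set.range g))
        ?_ ?_ ?_ ?_ hu
      · rintro _ ⟨l, hl, rfl⟩
        show emb (K := K) (A := A) (V l) ∈ Submodule.span A (Set.range g)
        simp only [Set.mem_setOf_eq] at hl
        have hgl : emb (K := K) (A := A) (V l) = g l := by
          rw [hg]; simp only [if_pos hl]
        rw [hgl]
        exact Submodule.subset_span ⟨l, rfl⟩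
      · show emb (K := K) (A := A) (0 : Fin k → K) ∈ Submodule.span A (Set.range g)
        have h00 : emb (K := K) (A := A) (0 : Fin k → K) = 0 := by
          funext j; simp [emb]
        rw [h00]; exact Submodule.zero_mem _
      · intro u v _ _ hu2 hv2
        show emb (K := K) (A := A) (u + v) ∈ Submodule.span A (Set.range g)
        have hadd : emb (K := K) (A := A) (u + v)
            = emb (K := K) (A := A) u + emb (K := K) (A := A) v := by
          funext j; simp [emb]
        rw [hadd]; exact Submodule.add_mem _ hu2 hv2
      · intro cK u _ hu2
        show emb (K := K) (A := A) (cK • u) ∈ Submodule.span A (Set.range g)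
        have hsm : emb (K := K) (A := A) (cK • u)
            = algebraMap K A cK • emb (K := K) (A := A) u := by
          funext j; simp [emb, smul_eq_mul]
        rw [hsm]; exact Submodule.smul_mem _ _ hu2
    obtain ⟨cf, hcf⟩ := (Submodule.mem_span_range_iff_exists_fun A).1 hx'
    set e : Fin h → A := fun l => pp b l - (if l.1 < i then cf l else 0) with he
    have hrel : ∀ j, ∑ l, e l * algebraMap K A (V l j) = d * (y j + t j) := by
      intro j
      have hx_j : ∑ l, (if l.1 < i then cf l else 0) * algebraMap K A (V l j) = x j := by
        rw [← hcf, Finset.sum_apply]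
        refine Finset.sum_congr rfl fun l _ => ?_
        by_cases hl : l.1 < i
        · simp [hg, hl, emb]
        · simp [hg, hl]
      have hsum : ∑ l, e l * algebraMap K A (V l j)
          = (∑ l, pp b l * algebraMap K A (V l j)) - x j := by
        rw [← hx_j, ← Finset.sum_sub_distrib]
        refine Finset.sum_congr rfl fun l _ => by rw [he]; ring
      rw [hsum, ← ha j, heqn j]; ring
    have hdvd := dvd_of_rel hres hV e d (fun j => y j + t j) hrel
    choose f hf using hdvd
    have hz : ∀ j, y j + t j = ∑ l, f l * algebraMap K A (V l j) := by
      intro j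
      apply mul_left_cancel₀ hd
      rw [← hrel j, Finset.mul_sum]
      exact Finset.sum_congr rfl fun l _ => by rw [hf l]; ring
    have hw : ∀ j, res hres (y j) = ∑ l, res hres (f l) * V l j := by
      intro j
      have h1 : res hres (y j) = res hres (y j + t j) := by
        rw [map_add, res_eq_zero hres (htm j), add_zero]
      rw [h1, hz j, map_sum]
      exact Finset.sum_congr rfl fun l _ => by rw [map_mul, res_algebraMap]
    have hfin : (fun j => res hres (y j)) = ∑ l, res hres (f l) • V l := by
      funext j; rw [hw j]; simp [Finset.sum_apply]
    rw [hfin]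
    apply Submodule.sum_mem
    intro l _
    by_cases hli : l.1 < min (i + 1) h
    · exact Submodule.smul_mem _ _ (Submodule.subset_span ⟨l, hli, rfl⟩)
    · have hl2 := l.2
      have hl1 : i + 1 ≤ l.1 := by omega
      have hih : i < h := by omega
      have hlil : (⟨i, hih⟩ : Fin h) < l :=
        Fin.lt_def.2 (lt_of_lt_of_le (Nat.lt_succ_self i) hl1)
      have hei : e ⟨i, hih⟩ = pp b ⟨i, hih⟩ := by rw [he]; simp
      have hel : e l = pp b l := by
        rw [he]; simp [Nat.not_lt.2 (by omega : i ≤ l.1)]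
      obtain ⟨qq, hqqm, hqqe⟩ := pp_factor hb hlil
      have hfl : f l = f ⟨i, hih⟩ * qq := by
        apply mul_left_cancel₀ hd
        calc d * f l = e l := (hf l).symm
          _ = pp b l := hel
          _ = pp b ⟨i, hih⟩ * qq := hqqe
          _ = e ⟨i, hih⟩ * qq := by rw [hei]
          _ = d * f ⟨i, hih⟩ * qq := by rw [hf ⟨i, hih⟩]
          _ = d * (f ⟨i, hih⟩ * qq) := mul_assoc _ _ _
      have h0 : res hres (f l) = 0 := by
        rw [hfl, map_mul, res_eq_zero hres hqqm, mul_zero]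
      rw [h0, zero_smul]
      exact Submodule.zero_mem _
  · -- each `V l`, `l < min(i+1,h)`, belongs to the step set
    rw [Submodule.span_le]
    rintro w ⟨l, hl, rfl⟩
    simp only [Set.mem_setOf_eq] at hl
    apply Submodule.subset_span
    rcases Nat.lt_succ_iff_lt_or_eq.1 (lt_of_lt_of_le hl (min_le_left _ _)) with hli | hli
    · -- old generator: take d = 1
      refine ⟨1,
        (∑ l' ∈ univ.filter (fun l' : Fin h => l'.1 < i),
            pp b l' • emb (K := K) (A := A) (V l')) - emb (K := K) (A := A) (V l),
        emb (K := K) (A := A) (V l),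
        fun j => ∑ l' ∈ univ.filter (fun l' : Fin h => ¬ l'.1 < i),
            pp b l' * algebraMap K A (V l' j),
        one_ne_zero, ?_, ?_, ?_, ?_⟩
      · refine Submodule.sub_mem _ (Submodule.sum_mem _ fun l' hl' => ?_) ?_
        · exact Submodule.smul_mem _ _ (Submodule.subset_span
            ⟨V l', Submodule.subset_span ⟨l', (mem_filter.1 hl').2, rfl⟩, rfl⟩)
        · exact Submodule.subset_span ⟨V l, Submodule.subset_span ⟨l, hli, rfl⟩, rfl⟩
      · intro j
        exact Ideal.sum_mem _ fun l' _ => Ideal.mul_mem_right _ _ (pp_mem hb l')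
      · intro j
        rw [ha j,
          ← Finset.sum_filter_add_sum_filter_not univ (fun l' : Fin h => l'.1 < i)
            (fun l' => pp b l' * algebraMap K A (V l' j))]
        simp only [Finset.sum_apply, Pi.sub_apply, Pi.smul_apply, smul_eq_mul, one_mul, emb]
        ring
      · funext j
        exact (res_algebraMap hres (V l j)).symm
    · -- new generator: take d = pp b l
      have hih : i < h := hli ▸ l.2
      have hq : ∀ l' : Fin h, ∃ qq : A, l < l' → qq ∈ maximalIdeal A ∧ pp b l' = pp b l * qq := by
        intro l'
        by_cases hll : l < l'
        · obtain ⟨q, hq1, hq2⟩ := pp_factor hb hll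
          exact ⟨q, fun _ => ⟨hq1, hq2⟩⟩
        · exact ⟨0, fun hc => absurd hc hll⟩
      choose q hq using hq
      refine ⟨pp b l,
        ∑ l' ∈ univ.filter (fun l' : Fin h => l' < l), pp b l' • emb (K := K) (A := A) (V l'),
        emb (K := K) (A := A) (V l),
        fun j => ∑ l' ∈ univ.filter (fun l' : Fin h => l < l'), q l' * algebraMap K A (V l' j),
        pp_ne_zero hb l, ?_, ?_, ?_, ?_⟩
      · refine Submodule.sum_mem _ fun l' hl' => Submodule.smul_mem _ _ ?_
        have hl'i : l'.1 < i := hli ▸ (mem_filter.1 hl').2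
        exact Submodule.subset_span ⟨V l', Submodule.subset_span ⟨l', hl'i, rfl⟩, rfl⟩
      · intro j
        exact Ideal.sum_mem _ fun l' hl' =>
          Ideal.mul_mem_right _ _ ((hq l' (mem_filter.1 hl').2).1)
      · intro j
        have hins : univ.filter (fun l' : Fin h => ¬ l' < l)
            = insert l (univ.filter (fun l' : Fin h => l < l')) := by
          ext x
          simp only [mem_filter, mem_univ, true_and, Finset.mem_insert, Fin.lt_def,
            Fin.ext_iff]
          omega
        rw [ha j,
          ← Finset.sum_filter_add_sum_filter_not univ (fun l' : Fin h => l' < l)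
            (fun l' => pp b l' * algebraMap K A (V l' j)),
          hins, Finset.sum_insert (by simp)]
        have hrest : ∑ l' ∈ univ.filter (fun l' : Fin h => l < l'),
            pp b l' * algebraMap K A (V l' j)
            = pp b l * ∑ l' ∈ univ.filter (fun l' : Fin h => l < l'),
                q l' * algebraMap K A (V l' j) := by
          rw [Finset.mul_sum]
          refine Finset.sum_congr rfl fun l' hl' => ?_
          rw [(hq l' (mem_filter.1 hl').2).2]; ring
        rw [hrest]
        simp only [Finset.sum_apply, Pi.smul_apply, smul_eq_mul, emb]
        ring
      · funext j
        exact (res_algebraMap hres (V l j)).symm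

include hres in
lemma flag_eq (V : Fin h → Fin k → K)
    (hb : ∀ i, b i ∈ maximalIdeal A ∧ b i ≠ 0) (hV : LinearIndependent K V)
    (a : Fin k → A) (ha : ∀ j, a j = ∑ i, pp b i * algebraMap K A (V i j)) :
    ∀ i : ℕ, i ≤ h → flag hres a i = Submodule.span K (V '' {l : Fin h | l.1 < i}) := by
  intro i
  induction i with
  | zero =>
    intro _
    have hempty : (V '' {l : Fin h | l.1 < 0}) = ∅ := by
      ext v; simp
    rw [flag, hempty, Submodule.span_empty]
  | succ i ih =>
    intro hi1
    have hi : i ≤ h := Nat.le_of_succ_le hi1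
    rw [flag, ih hi, key hres V hb hV a ha i hi, min_eq_left hi1]

include hres in
lemma flag_stab (V : Fin h → Fin k → K)
    (hb : ∀ i, b i ∈ maximalIdeal A ∧ b i ≠ 0) (hV : LinearIndependent K V)
    (a : Fin k → A) (ha : ∀ j, a j = ∑ i, pp b i * algebraMap K A (V i j)) :
    flag hres a (h + 1) = flag hres a h := by
  rw [flag, flag_eq hres V hb hV a ha h le_rfl, key hres V hb hV a ha h le_rfl,
    min_eq_right (Nat.le_succ h)]

end CanonDecomp


/-- **Uniqueness of the canonical decomposition.**
Let `K` be a field and `A` a deformation ring over `K` (a `K`-algebra which is a valuation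
domain whose residue field is `K` via the structure map) with maximal ideal `m`.  If a vector
of `mᵏ` admits two decompositions `b₁V₁ + b₁b₂V₂ + ⋯ + b₁⋯b_hV_h = c₁W₁ + ⋯ + c₁⋯c_sW_s`
with the `bᵢ, cᵢ` nonzero elements of `m` and `(Vᵢ)`, `(Wᵢ)` linearly independent families of
`Kᵏ`, then `h = s` and the two families generate the same flag:
`span{V₁,…,Vᵢ} = span{W₁,…,Wᵢ}` for every `i`. -/
theorem canonical_decomposition_unique
    (K : Type) [Field K] (A : Type) [CommRing A] [IsDomain A] [ValuationRing A] [Algebra K A]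
    (hres : Function.Bijective ((IsLocalRing.residue A).comp (algebraMap K A)))
    (k h s : ℕ)
    (b : Fin h → A) (c : Fin s → A)
    (V : Fin h → (Fin k → K)) (W : Fin s → (Fin k → K))
    (hb : ∀ i, b i ∈ IsLocalRing.maximalIdeal A ∧ b i ≠ 0)
    (hc : ∀ i, c i ∈ IsLocalRing.maximalIdeal A ∧ c i ≠ 0)
    (hV : LinearIndependent K V) (hW : LinearIndependent K W)
    (heq : ∀ j : Fin k,
      ∑ i : Fin h, (∏ l ∈ Finset.Iic i, b l) * algebraMap K A (V i j) =
      ∑ i : Fin s, (∏ l ∈ Finset.Iic i, c l) * algebraMap K A (W i j)) :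
    h = s ∧
    ∀ i : ℕ, i ≤ h →
      Submodule.span K {v | ∃ l : Fin h, l.1 < i ∧ v = V l} =
      Submodule.span K {w | ∃ l : Fin s, l.1 < i ∧ w = W l} := by
  classical
  set a : Fin k → A := fun j =>
    ∑ i : Fin h, (∏ l ∈ Finset.Iic i, b l) * algebraMap K A (V i j) with haDef
  have haV : ∀ j, a j = ∑ i, CanonDecomp.pp b i * algebraMap K A (V i j) := fun j => rfl
  have haW : ∀ j, a j = ∑ i, CanonDecomp.pp c i * algebraMap K A (W i j) := fun j => heq j
  have flagV := CanonDecomp.flag_eq hres V hb hV a haV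
  have flagW := CanonDecomp.flag_eq hres W hc hW a haW
  have stabV := CanonDecomp.flag_stab hres V hb hV a haV
  have stabW := CanonDecomp.flag_stab hres W hc hW a haW
  have hhs : h = s := by
    rcases Nat.lt_trichotomy h s with hlt | heq' | hlt
    · exfalso
      have e1 : Submodule.span K (W '' {l : Fin s | l.1 < h + 1})
          = Submodule.span K (W '' {l : Fin s | l.1 < h}) := by
        rw [← flagW (h + 1) hlt, ← flagW h (le_of_lt hlt), stabV]
      have hmem : W ⟨h, hlt⟩ ∈ Submodule.span K (W '' {l : Fin s | l.1 < h}) := by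
        rw [← e1]
        exact Submodule.subset_span ⟨⟨h, hlt⟩, Nat.lt_succ_self h, rfl⟩
      exact hW.notMem_span_image
        (by simp : (⟨h, hlt⟩ : Fin s) ∉ {l : Fin s | l.1 < h}) hmem
    · exact heq'
    · exfalso
      have e1 : Submodule.span K (V '' {l : Fin h | l.1 < s + 1})
          = Submodule.span K (V '' {l : Fin h | l.1 < s}) := by
        rw [← flagV (s + 1) hlt, ← flagV s (le_of_lt hlt), stabW]
      have hmem : V ⟨s, hlt⟩ ∈ Submodule.span K (V '' {l : Fin h | l.1 < s}) := by
        rw [← e1]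
        exact Submodule.subset_span ⟨⟨s, hlt⟩, Nat.lt_succ_self s, rfl⟩
      exact hV.notMem_span_image
        (by simp : (⟨s, hlt⟩ : Fin h) ∉ {l : Fin h | l.1 < s}) hmem
  refine ⟨hhs, fun i hi => ?_⟩
  have hsetV : {v | ∃ l : Fin h, l.1 < i ∧ v = V l} = V '' {l : Fin h | l.1 < i} := by
    ext v
    constructor
    · rintro ⟨l, hl, rfl⟩; exact ⟨l, hl, rfl⟩
    · rintro ⟨l, hl, rfl⟩; exact ⟨l, hl, rfl⟩
  have hsetW : {w | ∃ l : Fin s, l.1 < i ∧ w = W l} = W '' {l : Fin s | l.1 < i} := by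
    ext v
    constructor
    · rintro ⟨l, hl, rfl⟩; exact ⟨l, hl, rfl⟩
    · rintro ⟨l, hl, rfl⟩; exact ⟨l, hl, rfl⟩
  rw [hsetV, hsetW, ← flagV i hi, ← flagW i (hhs ▸ hi)]
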